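/- arXiv:1901.04377 — 3 statements merged into one kernel-verified Lean document; each statement's English description precedes it below -/
import Mathlib

section
/- For multilinear polynomials f and g over a field F in variables Y ∪ Z such that the sets of variables actually occurring in f and g are disjoint, the rank of the partial derivative matrix of the product fg equals the product of the ranks of the partial derivative matrices of f and g. -/
open MvPolynomial

/-- The exponent vector of the multilinear monomial `∏_{i∈p} y_i · ∏_{j∈q} z_j`,
where the `Y` variables are `Sum.inl` and the `Z` variables are `Sum.inr`. -/
noncomputable def mlMonom (m : ℕ) (p q : Finset (Fin m)) : (Fin m ⊕ Fin m) →₀ ℕ :=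
  (∑ i ∈ p, Finsupp.single (Sum.inl i) 1) + (∑ j ∈ q, Finsupp.single (Sum.inr j) 1)

/-- The partial derivative matrix of a polynomial in the variables `Y ∪ Z`. -/
noncomputable def pdMatrix (F : Type) [Field F] (m : ℕ)
    (f : MvPolynomial (Fin m ⊕ Fin m) F) :
    Matrix (Finset (Fin m)) (Finset (Fin m)) F :=
  fun p q => f.coeff (mlMonom m p q)

noncomputable def pdRank (F : Type) [Field F] (m : ℕ)
    (f : MvPolynomial (Fin m ⊕ Fin m) F) : ℕ :=
  (pdMatrix F m f).rank

/-- A polynomial is multilinear if every variable has degree at most 1 in each monomial. -/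
def IsMultilinear {F V : Type*} [CommSemiring F] (f : MvPolynomial V F) : Prop :=
  ∀ mo ∈ f.support, ∀ v, mo v ≤ 1

section LinearAlgebraAux

open Matrix Kronecker Module LinearMap

variable {F : Type} [Field F]

lemma finrank_range_tensorMap {M N M' N' : Type*} [AddCommGroup M] [AddCommGroup N]
    [AddCommGroup M'] [AddCommGroup N'] [Module F M] [Module F N] [Module F M'] [Module F N']
    (f : M →ₗ[F] M') (g : N →ₗ[F] N') :
    finrank F (LinearMap.range (TensorProduct.map f g)) =
      finrank F (LinearMap.range f) * finrank F (LinearMap.range g) := by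
  have h1 : TensorProduct.map f g =
      (TensorProduct.mapIncl (LinearMap.range f) (LinearMap.range g)) ∘ₗ
        TensorProduct.map f.rangeRestrict g.rangeRestrict := by
    rw [TensorProduct.mapIncl, ← TensorProduct.map_comp]
    rfl
  have hsurj : Function.Surjective (TensorProduct.map f.rangeRestrict g.rangeRestrict) :=
    TensorProduct.map_surjective f.surjective_rangeRestrict g.surjective_rangeRestrict
  have hinj : Function.Injective (TensorProduct.mapIncl (LinearMap.range f)
      (LinearMap.range g)) := by
    rw [TensorProduct.mapIncl, ← LinearMap.lTensor_comp_rTensor, LinearMap.coe_comp]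
    exact (Module.Flat.lTensor_preserves_injective_linearMap _
        (Submodule.injective_subtype _)).comp
      (Module.Flat.rTensor_preserves_injective_linearMap _ (Submodule.injective_subtype _))
  rw [h1, LinearMap.range_comp, LinearMap.range_eq_top.mpr hsurj, Submodule.map_top,
    LinearMap.finrank_range_of_inj hinj, Module.finrank_tensorProduct]

lemma rank_kronecker {ι κ ι' κ' : Type*} [Fintype ι] [Fintype κ] [Fintype ι'] [Fintype κ']
    [DecidableEq κ] [DecidableEq κ'] (A : Matrix ι κ F) (B : Matrix ι' κ' F) :
    (A ⊗ₖ B).rank = A.rank * B.rank := by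
  classical
  rw [A.rank_eq_finrank_range_toLin (Pi.basisFun F ι) (Pi.basisFun F κ),
      B.rank_eq_finrank_range_toLin (Pi.basisFun F ι') (Pi.basisFun F κ'),
      (A ⊗ₖ B).rank_eq_finrank_range_toLin
        ((Pi.basisFun F ι).tensorProduct (Pi.basisFun F ι'))
        ((Pi.basisFun F κ).tensorProduct (Pi.basisFun F κ')),
      Matrix.toLin_kronecker, finrank_range_tensorMap]

lemma rank_single {ι κ : Type*} [Fintype ι] [Fintype κ] [DecidableEq ι] [DecidableEq κ]
    (i₀ : ι) (j₀ : κ) :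
    (Matrix.of (fun i j => if i = i₀ ∧ j = j₀ then (1 : F) else 0)).rank = 1 := by
  classical
  set M : Matrix ι κ F := Matrix.of (fun i j => if i = i₀ ∧ j = j₀ then (1 : F) else 0) with hM
  have hmv : ∀ v, M.mulVecLin v = v j₀ • (Pi.single i₀ 1 : ι → F) := by
    intro v
    funext i
    simp only [Matrix.mulVecLin_apply, Matrix.mulVec, dotProduct, hM, Matrix.of_apply,
      ite_and, Pi.smul_apply, Pi.single_apply, smul_eq_mul]
    by_cases hi : i = i₀ <;> simp [hi, ite_mul, Finset.sum_ite_eq', mul_comm]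
  have hr : LinearMap.range M.mulVecLin = Submodule.span F {(Pi.single i₀ 1 : ι → F)} := by
    apply le_antisymm
    · rintro x ⟨v, rfl⟩
      rw [hmv]
      exact Submodule.smul_mem _ _ (Submodule.mem_span_singleton_self _)
    · rw [Submodule.span_le, Set.singleton_subset_iff]
      exact ⟨Pi.single j₀ 1, by rw [hmv]; simp⟩
  have hne : (Pi.single i₀ 1 : ι → F) ≠ 0 := by
    intro h
    have := congrFun h i₀
    rw [Pi.single_eq_same] at this
    exact one_ne_zero this
  rw [Matrix.rank, hr, finrank_span_singleton hne]

end LinearAlgebraAux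

section CombinatorialAux

lemma mlMonom_apply_inl (m : ℕ) (p q : Finset (Fin m)) (i : Fin m) :
    mlMonom m p q (Sum.inl i) = if i ∈ p then 1 else 0 := by
  classical
  simp [mlMonom, Finsupp.finset_sum_apply, Finsupp.single_apply]

lemma mlMonom_apply_inr (m : ℕ) (p q : Finset (Fin m)) (j : Fin m) :
    mlMonom m p q (Sum.inr j) = if j ∈ q then 1 else 0 := by
  classical
  simp [mlMonom, Finsupp.finset_sum_apply, Finsupp.single_apply]

lemma mem_support_mlMonom (m : ℕ) (p q : Finset (Fin m)) (v : Fin m ⊕ Fin m) :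
    v ∈ (mlMonom m p q).support ↔
      (∃ i ∈ p, v = Sum.inl i) ∨ (∃ j ∈ q, v = Sum.inr j) := by
  cases v with
  | inl i => simp [Finsupp.mem_support_iff, mlMonom_apply_inl, ite_eq_right_iff]
  | inr j => simp [Finsupp.mem_support_iff, mlMonom_apply_inr, ite_eq_right_iff]

/-- filtering a multilinear monomial by a variable set. -/
lemma filter_mlMonom (m : ℕ) (S : Finset (Fin m ⊕ Fin m)) (p q : Finset (Fin m)) :
    (mlMonom m p q).filter (· ∈ S) =
      mlMonom m (p.filter (fun i => Sum.inl i ∈ S)) (q.filter (fun j => Sum.inr j ∈ S)) := by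
  classical
  ext v
  cases v with
  | inl i =>
      rw [Finsupp.filter_apply, mlMonom_apply_inl, mlMonom_apply_inl]
      simp only [Finset.mem_filter]
      split_ifs <;> tauto
  | inr j =>
      rw [Finsupp.filter_apply, mlMonom_apply_inr, mlMonom_apply_inr]
      simp only [Finset.mem_filter]
      split_ifs <;> tauto

lemma support_subset_vars {σ R : Type*} [CommSemiring R] {h : MvPolynomial σ R}
    {d : σ →₀ ℕ} (hc : coeff d h ≠ 0) : ∀ v ∈ d.support, v ∈ h.vars := fun v hv =>
  (mem_vars v).mpr ⟨d, mem_support_iff.mpr hc, hv⟩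

lemma coeff_mul_disjoint {σ R : Type*} [CommRing R] [IsDomain R] [DecidableEq σ]
    (f g : MvPolynomial σ R) (hdisj : Disjoint f.vars g.vars) (d : σ →₀ ℕ)
    (hd : ∀ v ∈ d.support, v ∈ f.vars ∪ g.vars) :
    coeff d (f * g) =
      coeff (d.filter (· ∈ f.vars)) f * coeff (d.filter (· ∈ g.vars)) g := by
  classical
  rw [coeff_mul]
  apply Finset.sum_eq_single_of_mem (d.filter (· ∈ f.vars), d.filter (· ∈ g.vars))
  · rw [Finset.HasAntidiagonal.mem_antidiagonal]
    ext v
    rw [Finsupp.add_apply, Finsupp.filter_apply, Finsupp.filter_apply]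
    by_cases h1 : v ∈ f.vars
    · have h2 : v ∉ g.vars := fun h2 => (Finset.disjoint_left.mp hdisj h1) h2
      simp [h1, h2]
    · by_cases h2 : v ∈ g.vars
      · simp [h1, h2]
      · have : d v = 0 := by
          by_contra hv
          rcases Finset.mem_union.mp (hd v (Finsupp.mem_support_iff.mpr hv)) with h | h
          exacts [h1 h, h2 h]
        simp [h1, h2, this]
  · rintro ⟨u, w⟩ hmem hne
    rw [Finset.HasAntidiagonal.mem_antidiagonal] at hmem
    by_contra hnz
    have hu : coeff u f ≠ 0 := left_ne_zero_of_mul hnz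
    have hw : coeff w g ≠ 0 := right_ne_zero_of_mul hnz
    have hus : ∀ v ∈ u.support, v ∈ f.vars := support_subset_vars hu
    have hws : ∀ v ∈ w.support, v ∈ g.vars := support_subset_vars hw
    apply hne
    have hu' : u = d.filter (· ∈ f.vars) := by
      ext v
      rw [Finsupp.filter_apply]
      by_cases h1 : v ∈ f.vars
      · have h2 : w v = 0 := by
          by_contra h
          exact Finset.disjoint_left.mp hdisj h1 (hws v (Finsupp.mem_support_iff.mpr h))
        rw [if_pos h1, ← hmem, Finsupp.add_apply, h2, add_zero]
      · rw [if_neg h1]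
        by_contra h
        exact h1 (hus v (Finsupp.mem_support_iff.mpr h))
    have hw' : w = d.filter (· ∈ g.vars) := by
      ext v
      rw [Finsupp.filter_apply]
      by_cases h1 : v ∈ g.vars
      · have h2 : u v = 0 := by
          by_contra h
          exact Finset.disjoint_left.mp hdisj (hus v (Finsupp.mem_support_iff.mpr h)) h1
        rw [if_pos h1, ← hmem, Finsupp.add_apply, h2, zero_add]
      · rw [if_neg h1]
        by_contra h
        exact h1 (hws v (Finsupp.mem_support_iff.mpr h))
    rw [hu', hw']

/-- splitting subsets against a fixed set and its complement -/
def splitCompl {γ : Type*} [DecidableEq γ] [Fintype γ] (A : Finset γ) :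
    Finset γ ≃ {p : Finset γ // p ⊆ A} × {p : Finset γ // p ⊆ Aᶜ} where
  toFun p := (⟨p ∩ A, Finset.inter_subset_right⟩,
    ⟨p \ A, fun x hx => Finset.mem_compl.mpr (Finset.mem_sdiff.mp hx).2⟩)
  invFun x := x.1.1 ∪ x.2.1
  left_inv p := by
    simp only
    ext x
    simp only [Finset.mem_union, Finset.mem_inter, Finset.mem_sdiff]
    tauto
  right_inv x := by
    obtain ⟨⟨a, ha⟩, ⟨c, hc⟩⟩ := x
    have hca : ∀ y ∈ c, y ∉ A := fun y hy => Finset.mem_compl.mp (hc hy)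
    ext x
    · simp only [Finset.mem_inter, Finset.mem_union]
      constructor
      · rintro ⟨h | h, hA⟩
        · exact h
        · exact absurd hA (hca x h)
      · exact fun h => ⟨Or.inl h, ha h⟩
    · simp only [Finset.mem_sdiff, Finset.mem_union]
      constructor
      · rintro ⟨h | h, hA⟩
        · exact absurd (ha h) hA
        · exact h
      · exact fun h => ⟨Or.inr h, hca x h⟩

/-- splitting subsets of a disjoint union -/
def splitUnion {γ : Type*} [DecidableEq γ] (A B : Finset γ) (hAB : Disjoint A B) :
    {p : Finset γ // p ⊆ A ∪ B} ≃ {p : Finset γ // p ⊆ A} × {p : Finset γ // p ⊆ B} where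
  toFun p := (⟨p.1 ∩ A, Finset.inter_subset_right⟩, ⟨p.1 ∩ B, Finset.inter_subset_right⟩)
  invFun x := ⟨x.1.1 ∪ x.2.1, Finset.union_subset_union x.1.2 x.2.2⟩
  left_inv p := by
    obtain ⟨p, hp⟩ := p
    ext x
    simp only [Finset.mem_union, Finset.mem_inter]
    constructor
    · rintro (⟨h, _⟩ | ⟨h, _⟩) <;> exact h
    · intro h
      rcases Finset.mem_union.mp (hp h) with hA | hB
      · exact Or.inl ⟨h, hA⟩
      · exact Or.inr ⟨h, hB⟩
  right_inv x := by
    obtain ⟨⟨a, ha⟩, ⟨b, hb⟩⟩ := x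
    have h1 : ∀ y ∈ a, y ∉ B := fun y hy => Finset.disjoint_left.mp hAB (ha hy)
    have h2 : ∀ y ∈ b, y ∉ A := fun y hy => Finset.disjoint_right.mp hAB (hb hy)
    ext x
    · simp only [Finset.mem_inter, Finset.mem_union]
      constructor
      · rintro ⟨h | h, hA⟩
        · exact h
        · exact absurd hA (h2 x h)
      · exact fun h => ⟨Or.inl h, ha h⟩
    · simp only [Finset.mem_inter, Finset.mem_union]
      constructor
      · rintro ⟨h | h, hB⟩
        · exact absurd hB (h1 x h)
        · exact h
      · exact fun h => ⟨Or.inr h, hb h⟩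

end CombinatorialAux

section MainAux

open Kronecker

variable {F : Type} [Field F] {m : ℕ}

lemma rank_reindex' {R : Type*} [CommRing R] {k l n o : Type*} [Fintype l] [Fintype o]
    (A : Matrix k l R) (e₁ : k ≃ n) (e₂ : l ≃ o) :
    (Matrix.reindex e₁ e₂ A).rank = A.rank := by
  rw [Matrix.rank, Matrix.rank, Matrix.mulVecLin_reindex, LinearMap.range_comp,
    LinearMap.range_comp, LinearEquiv.range, Submodule.map_top, LinearEquiv.finrank_map_eq]

lemma rank_submatrix' {R : Type*} [CommRing R] {k l n o : Type*} [Fintype l] [Fintype o]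
    (A : Matrix k l R) (e₁ : n ≃ k) (e₂ : o ≃ l) :
    (A.submatrix e₁ e₂).rank = A.rank := by
  simpa only [Matrix.reindex_apply, Equiv.symm_symm] using rank_reindex' A e₁.symm e₂.symm

lemma pdMatrix_submatrix_splitCompl (h : MvPolynomial (Fin m ⊕ Fin m) F) (P Q : Finset (Fin m))
    (hP : ∀ i, Sum.inl i ∈ h.vars → i ∈ P) (hQ : ∀ j, Sum.inr j ∈ h.vars → j ∈ Q) :
    (pdMatrix F m h).submatrix ⇑(splitCompl P).symm ⇑(splitCompl Q).symm =
      (Matrix.of fun (a : {a : Finset (Fin m) // a ⊆ P})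
          (a' : {a' : Finset (Fin m) // a' ⊆ Q}) => pdMatrix F m h a.1 a'.1) ⊗ₖ
        (Matrix.of fun (c : {c : Finset (Fin m) // c ⊆ Pᶜ})
          (c' : {c' : Finset (Fin m) // c' ⊆ Qᶜ}) =>
            if c = ⟨∅, Finset.empty_subset _⟩ ∧ c' = ⟨∅, Finset.empty_subset _⟩
            then (1 : F) else 0) := by
  classical
  ext ⟨⟨a, ha⟩, ⟨c, hc⟩⟩ ⟨⟨a', ha'⟩, ⟨c', hc'⟩⟩
  show pdMatrix F m h (a ∪ c) (a' ∪ c') = pdMatrix F m h a a' *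
    (if (⟨c, hc⟩ : {c : Finset (Fin m) // c ⊆ Pᶜ}) = ⟨∅, Finset.empty_subset _⟩ ∧
        (⟨c', hc'⟩ : {c' : Finset (Fin m) // c' ⊆ Qᶜ}) = ⟨∅, Finset.empty_subset _⟩
     then (1 : F) else 0)
  simp only [Subtype.mk.injEq]
  by_cases hce : c = ∅
  · by_cases hc'e : c' = ∅
    · subst hce; subst hc'e
      simp [Finset.union_empty]
    · rw [if_neg (fun hh => hc'e hh.2), mul_zero]
      obtain ⟨j, hj⟩ := Finset.nonempty_iff_ne_empty.mpr hc'e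
      show (h.coeff (mlMonom m (a ∪ c) (a' ∪ c'))) = 0
      by_contra hnz
      have hv := support_subset_vars hnz (Sum.inr j)
        ((mem_support_mlMonom m _ _ _).mpr (Or.inr ⟨j, Finset.mem_union_right _ hj, rfl⟩))
      exact Finset.mem_compl.mp (hc' hj) (hQ j hv)
  · rw [if_neg (fun hh => hce hh.1), mul_zero]
    obtain ⟨i, hi⟩ := Finset.nonempty_iff_ne_empty.mpr hce
    show (h.coeff (mlMonom m (a ∪ c) (a' ∪ c'))) = 0
    by_contra hnz
    have hv := support_subset_vars hnz (Sum.inl i)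
      ((mem_support_mlMonom m _ _ _).mpr (Or.inl ⟨i, Finset.mem_union_right _ hi, rfl⟩))
    exact Finset.mem_compl.mp (hc hi) (hP i hv)

lemma pdRank_eq_restrict (h : MvPolynomial (Fin m ⊕ Fin m) F) (P Q : Finset (Fin m))
    (hP : ∀ i, Sum.inl i ∈ h.vars → i ∈ P) (hQ : ∀ j, Sum.inr j ∈ h.vars → j ∈ Q) :
    pdRank F m h = (Matrix.of fun (a : {a : Finset (Fin m) // a ⊆ P})
        (a' : {a' : Finset (Fin m) // a' ⊆ Q}) => pdMatrix F m h a.1 a'.1).rank := by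
  classical
  rw [pdRank, ← rank_submatrix' (pdMatrix F m h) (splitCompl P).symm (splitCompl Q).symm,
    pdMatrix_submatrix_splitCompl h P Q hP hQ, rank_kronecker, rank_single, mul_one]

end MainAux

/-- multiplicativity of rank for products of polynomials on
disjoint sets of variables. -/
theorem pdRank_mul (F : Type) [Field F] (m : ℕ)
    (f g : MvPolynomial (Fin m ⊕ Fin m) F)
    (hf : IsMultilinear f) (hg : IsMultilinear g)
    (hdisj : Disjoint f.vars g.vars) :
    pdRank F m (f * g) = pdRank F m f * pdRank F m g := by
  classical
  set AY : Finset (Fin m) := Finset.univ.filter (fun i => Sum.inl i ∈ f.vars) with hAY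
  set AZ : Finset (Fin m) := Finset.univ.filter (fun j => Sum.inr j ∈ f.vars) with hAZ
  set BY : Finset (Fin m) := Finset.univ.filter (fun i => Sum.inl i ∈ g.vars) with hBY
  set BZ : Finset (Fin m) := Finset.univ.filter (fun j => Sum.inr j ∈ g.vars) with hBZ
  have hAYm : ∀ i, i ∈ AY ↔ Sum.inl i ∈ f.vars := fun i => by rw [hAY]; simp
  have hAZm : ∀ j, j ∈ AZ ↔ Sum.inr j ∈ f.vars := fun j => by rw [hAZ]; simp
  have hBYm : ∀ i, i ∈ BY ↔ Sum.inl i ∈ g.vars := fun i => by rw [hBY]; simp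
  have hBZm : ∀ j, j ∈ BZ ↔ Sum.inr j ∈ g.vars := fun j => by rw [hBZ]; simp
  have hY : Disjoint AY BY := by
    rw [Finset.disjoint_left]
    intro i h1 h2
    exact Finset.disjoint_left.mp hdisj ((hAYm i).mp h1) ((hBYm i).mp h2)
  have hZ : Disjoint AZ BZ := by
    rw [Finset.disjoint_left]
    intro j h1 h2
    exact Finset.disjoint_left.mp hdisj ((hAZm j).mp h1) ((hBZm j).mp h2)
  have hf1 := pdRank_eq_restrict f AY AZ (fun i hi => (hAYm i).mpr hi) (fun j hj => (hAZm j).mpr hj)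
  have hg1 := pdRank_eq_restrict g BY BZ (fun i hi => (hBYm i).mpr hi) (fun j hj => (hBZm j).mpr hj)
  have hfg1 := pdRank_eq_restrict (f * g) (AY ∪ BY) (AZ ∪ BZ)
    (fun i hi => by
      rcases Finset.mem_union.mp (vars_mul f g hi) with h | h
      · exact Finset.mem_union_left _ ((hAYm i).mpr h)
      · exact Finset.mem_union_right _ ((hBYm i).mpr h))
    (fun j hj => by
      rcases Finset.mem_union.mp (vars_mul f g hj) with h | h
      · exact Finset.mem_union_left _ ((hAZm j).mpr h)
      · exact Finset.mem_union_right _ ((hBZm j).mpr h))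
  rw [hfg1, hf1, hg1,
    ← rank_submatrix' _ (splitUnion AY BY hY).symm (splitUnion AZ BZ hZ).symm,
    ← rank_kronecker]
  congr 1
  ext ⟨⟨a, ha⟩, ⟨b, hb⟩⟩ ⟨⟨a', ha'⟩, ⟨b', hb'⟩⟩
  show (f * g).coeff (mlMonom m (a ∪ b) (a' ∪ b')) =
    f.coeff (mlMonom m a a') * g.coeff (mlMonom m b b')
  have hd : ∀ v ∈ (mlMonom m (a ∪ b) (a' ∪ b')).support, v ∈ f.vars ∪ g.vars := by
    intro v hv
    rcases (mem_support_mlMonom m _ _ v).mp hv with ⟨i, hi, rfl⟩ | ⟨j, hj, rfl⟩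
    · rcases Finset.mem_union.mp hi with h | h
      · exact Finset.mem_union_left _ ((hAYm i).mp (ha h))
      · exact Finset.mem_union_right _ ((hBYm i).mp (hb h))
    · rcases Finset.mem_union.mp hj with h | h
      · exact Finset.mem_union_left _ ((hAZm j).mp (ha' h))
      · exact Finset.mem_union_right _ ((hBZm j).mp (hb' h))
  have e1 : (a ∪ b).filter (fun i => Sum.inl i ∈ f.vars) = a := by
    ext i
    simp only [Finset.mem_filter, Finset.mem_union]
    constructor
    · rintro ⟨h | h, hv⟩
      · exact h
      · exact absurd hv (fun hv => Finset.disjoint_left.mp hdisj hv ((hBYm i).mp (hb h)))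
    · exact fun h => ⟨Or.inl h, (hAYm i).mp (ha h)⟩
  have e2 : (a' ∪ b').filter (fun j => Sum.inr j ∈ f.vars) = a' := by
    ext j
    simp only [Finset.mem_filter, Finset.mem_union]
    constructor
    · rintro ⟨h | h, hv⟩
      · exact h
      · exact absurd hv (fun hv => Finset.disjoint_left.mp hdisj hv ((hBZm j).mp (hb' h)))
    · exact fun h => ⟨Or.inl h, (hAZm j).mp (ha' h)⟩
  have e3 : (a ∪ b).filter (fun i => Sum.inl i ∈ g.vars) = b := by
    ext i
    simp only [Finset.mem_filter, Finset.mem_union]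
    constructor
    · rintro ⟨h | h, hv⟩
      · exact absurd hv (fun hv => Finset.disjoint_right.mp hdisj hv ((hAYm i).mp (ha h)))
      · exact h
    · exact fun h => ⟨Or.inr h, (hBYm i).mp (hb h)⟩
  have e4 : (a' ∪ b').filter (fun j => Sum.inr j ∈ g.vars) = b' := by
    ext j
    simp only [Finset.mem_filter, Finset.mem_union]
    constructor
    · rintro ⟨h | h, hv⟩
      · exact absurd hv (fun hv => Finset.disjoint_right.mp hdisj hv ((hAZm j).mp (ha' h)))
      · exact h
    · exact fun h => ⟨Or.inr h, (hBZm j).mp (hb' h)⟩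
  rw [show (f * g).coeff (mlMonom m (a ∪ b) (a' ∪ b')) =
      coeff (mlMonom m (a ∪ b) (a' ∪ b')) (f * g) from rfl,
    coeff_mul_disjoint f g hdisj _ hd, filter_mlMonom, filter_mlMonom, e1, e2, e3, e4]
end

section
/- If a multilinear polynomial f depends only on variables in Y₁ ∪ Z₁ with Y₁ ⊆ Y and Z₁ ⊆ Z, then the rank of its partial derivative matrix is at most 2^{min(|Y₁|, |Z₁|)}. -/
open MvPolynomial

lemma coeff_ne_zero_subsets {F : Type} [Field F] {m : ℕ}
    {f : MvPolynomial (Fin m ⊕ Fin m) F} {Y₁ Z₁ : Finset (Fin m)}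
    (hvars : f.vars ⊆ Y₁.image Sum.inl ∪ Z₁.image Sum.inr)
    {p q : Finset (Fin m)} (h : f.coeff (mlMonom m p q) ≠ 0) :
    p ⊆ Y₁ ∧ q ⊆ Z₁ := by
  classical
  have hsupp : mlMonom m p q ∈ f.support := by simpa [mem_support_iff] using h
  constructor
  · intro i hi
    have hv : Sum.inl i ∈ f.vars :=
      (mem_vars _).2 ⟨_, hsupp, by simp [Finsupp.mem_support_iff, mlMonom_apply_inl, hi]⟩
    have := hvars hv
    simp only [Finset.mem_union, Finset.mem_image] at this
    rcases this with ⟨a, ha, hai⟩ | ⟨a, _, hai⟩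
    · exact (Sum.inl.inj hai) ▸ ha
    · exact absurd hai (by simp)
  · intro j hj
    have hv : Sum.inr j ∈ f.vars :=
      (mem_vars _).2 ⟨_, hsupp, by simp [Finsupp.mem_support_iff, mlMonom_apply_inr, hj]⟩
    have := hvars hv
    simp only [Finset.mem_union, Finset.mem_image] at this
    rcases this with ⟨a, _, hai⟩ | ⟨a, ha, hai⟩
    · exact absurd hai (by simp)
    · exact (Sum.inr.inj hai) ▸ ha

/-- if `f` depends only on variables in `Y₁ ∪ Z₁` with `Y₁ ⊆ Y`,
`Z₁ ⊆ Z`, then its partial derivative matrix has rank at most `2^min(|Y₁|,|Z₁|)`. -/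
theorem pdRank_le_of_vars_subset (F : Type) [Field F] (m : ℕ)
    (f : MvPolynomial (Fin m ⊕ Fin m) F) (hf : IsMultilinear f)
    (Y₁ Z₁ : Finset (Fin m))
    (hvars : f.vars ⊆ Y₁.image Sum.inl ∪ Z₁.image Sum.inr) :
    pdRank F m f ≤ 2 ^ (min Y₁.card Z₁.card) := by
  classical
  set M := pdMatrix F m f with hMdef
  have hz : ∀ p q, ¬ q ⊆ Z₁ → M p q = 0 := by
    intro p q hq
    by_contra h
    exact hq (coeff_ne_zero_subsets hvars h).2
  have hy : ∀ p q, ¬ p ⊆ Y₁ → M p q = 0 := by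
    intro p q hp
    by_contra h
    exact hp (coeff_ne_zero_subsets hvars h).1
  have h1 : pdRank F m f ≤ 2 ^ Z₁.card := by
    let A : Matrix (Finset (Fin m)) ↥Z₁.powerset F := fun p t => M p t
    let D : Matrix ↥Z₁.powerset (Finset (Fin m)) F :=
      fun t q => if (t : Finset (Fin m)) = q then 1 else 0
    have hM : M = A * D := by
      ext p q
      by_cases hq : q ⊆ Z₁
      · rw [Matrix.mul_apply,
          Fintype.sum_eq_single (⟨q, Finset.mem_powerset.2 hq⟩ : ↥Z₁.powerset)]
        · simp [A, D]
        · intro t ht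
          have : (t : Finset (Fin m)) ≠ q := fun h => ht (Subtype.ext h)
          simp [A, D, this]
      · rw [hz p q hq, Matrix.mul_apply]
        symm
        apply Finset.sum_eq_zero
        intro t _
        have : (t : Finset (Fin m)) ≠ q := by
          intro h
          exact hq (h ▸ Finset.mem_powerset.1 t.2)
        simp [A, D, this]
    calc M.rank = (A * D).rank := by rw [hM]
      _ ≤ A.rank := Matrix.rank_mul_le_left A D
      _ ≤ Fintype.card ↥Z₁.powerset := Matrix.rank_le_card_width A
      _ = 2 ^ Z₁.card := by rw [Fintype.card_coe, Finset.card_powerset]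
  have h2 : pdRank F m f ≤ 2 ^ Y₁.card := by
    let A : Matrix ↥Y₁.powerset (Finset (Fin m)) F := fun s q => M s q
    let D : Matrix (Finset (Fin m)) ↥Y₁.powerset F :=
      fun p s => if p = (s : Finset (Fin m)) then 1 else 0
    have hM : M = D * A := by
      ext p q
      by_cases hp : p ⊆ Y₁
      · rw [Matrix.mul_apply,
          Fintype.sum_eq_single (⟨p, Finset.mem_powerset.2 hp⟩ : ↥Y₁.powerset)]
        · simp [A, D]
        · intro s hs
          have : p ≠ (s : Finset (Fin m)) := fun h => hs (Subtype.ext h.symm)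
          simp [A, D, this]
      · rw [hy p q hp, Matrix.mul_apply]
        symm
        apply Finset.sum_eq_zero
        intro s _
        have : p ≠ (s : Finset (Fin m)) := by
          intro h
          exact hp (h ▸ Finset.mem_powerset.1 s.2)
        simp [A, D, this]
    calc M.rank = (D * A).rank := by rw [hM]
      _ ≤ A.rank := Matrix.rank_mul_le_right D A
      _ ≤ Fintype.card ↥Y₁.powerset := Matrix.rank_le_card_height A
      _ = 2 ^ Y₁.card := by rw [Fintype.card_coe, Finset.card_powerset]
  rcases le_total Y₁.card Z₁.card with h | h
  · rw [min_eq_left h]; exact h2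
  · rw [min_eq_right h]; exact h1
end

section
/- Let φ : X → Y ∪ Z be a partition of the variable set X and let X₁ ⊆ X be monochromatic under φ, i.e., either φ(X₁) ∩ Y = ∅ or φ(X₁) ∩ Z = ∅. Then for any multilinear polynomial p depending only on variables in X₁, the rank of the partial derivative matrix of p^φ (p with each x ∈ X₁ relabeled by φ(x)) is at most 1. -/
open MvPolynomial

lemma rank_le_one_of_col {α : Type*} [Fintype α] [DecidableEq α] {F : Type} [Field F]
    (M : Matrix α α F) (c : α) (h : ∀ i j, j ≠ c → M i j = 0) : M.rank ≤ 1 := by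
  have hM : M = (Matrix.of fun i (_ : Fin 1) => M i c) *
      (Matrix.of fun (_ : Fin 1) j => if j = c then (1:F) else 0) := by
    ext i j
    by_cases hj : j = c
    · subst hj; simp [Matrix.mul_apply]
    · simp [Matrix.mul_apply, hj, h i j hj]
  rw [hM]
  exact (Matrix.rank_mul_le_left _ _).trans ((Matrix.rank_le_card_width _).trans (by simp))

lemma rank_le_one_of_row {α : Type*} [Fintype α] [DecidableEq α] {F : Type} [Field F]
    (M : Matrix α α F) (c : α) (h : ∀ i j, i ≠ c → M i j = 0) : M.rank ≤ 1 := by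
  rw [← Matrix.rank_transpose]
  exact rank_le_one_of_col M.transpose c fun i j hj => h j i hj

/-- a multilinear polynomial depending only on a monochromatic set
of variables has partial derivative matrix of rank at most 1 after relabeling
via the injective partition map `φ`. -/
theorem pdRank_le_one_of_monochromatic (F : Type) [Field F] (n m : ℕ)
    (hbal : n = 2 * m)
    (φ : Fin n → Fin m ⊕ Fin m) (hinj : Function.Injective φ)
    (X₁ : Finset (Fin n))
    (hmono : (∀ x ∈ X₁, ∃ i, φ x = Sum.inl i) ∨ (∀ x ∈ X₁, ∃ i, φ x = Sum.inr i))
    (p : MvPolynomial (Fin n) F) (hml : IsMultilinear p)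
    (hvars : p.vars ⊆ X₁) :
    pdRank F m (MvPolynomial.rename φ p) ≤ 1 := by
  set f := MvPolynomial.rename φ p with hf
  have hfvars : f.vars ⊆ X₁.image φ := by
    intro v hv
    obtain ⟨x, hx, hxv⟩ := Finset.mem_image.mp (MvPolynomial.vars_rename φ p hv)
    exact Finset.mem_image.mpr ⟨x, hvars hx, hxv⟩
  rcases hmono with hL | hR
  · refine rank_le_one_of_col (pdMatrix F m f) ∅ fun pp qq hqq => ?_
    by_contra hne
    obtain ⟨j, hj⟩ := Finset.nonempty_iff_ne_empty.mpr hqq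
    have hmem : mlMonom m pp qq ∈ f.support := MvPolynomial.mem_support_iff.mpr hne
    have hvar : Sum.inr j ∈ f.vars := by
      rw [MvPolynomial.mem_vars]
      exact ⟨mlMonom m pp qq, hmem, Finsupp.mem_support_iff.mpr (by
        rw [mlMonom_apply_inr]; simp [hj])⟩
    obtain ⟨x, hx, hxv⟩ := Finset.mem_image.mp (hfvars hvar)
    obtain ⟨i, hi⟩ := hL x hx
    simp [hi] at hxv
  · refine rank_le_one_of_row (pdMatrix F m f) ∅ fun pp qq hpp => ?_
    by_contra hne
    obtain ⟨j, hj⟩ := Finset.nonempty_iff_ne_empty.mpr hpp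
    have hmem : mlMonom m pp qq ∈ f.support := MvPolynomial.mem_support_iff.mpr hne
    have hvar : Sum.inl j ∈ f.vars := by
      rw [MvPolynomial.mem_vars]
      exact ⟨mlMonom m pp qq, hmem, Finsupp.mem_support_iff.mpr (by
        rw [mlMonom_apply_inl]; simp [hj])⟩
    obtain ⟨x, hx, hxv⟩ := Finset.mem_image.mp (hfvars hvar)
    obtain ⟨i, hi⟩ := hR x hx
    simp [hi] at hxv
end
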